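/- Let A be a unital Banach algebra and let (x_t) and (y_t), for t ∈ [1,∞), be continuous paths of elements of A that are uniformly bounded in norm, and suppose that the commutator [x_t, y_t] = x_t y_t - y_t x_t tends to 0 in norm as t → ∞. Then ‖exp(x_t + y_t) - exp(x_t)·exp(y_t)‖ → 0 as t → ∞. -/

import Mathlib

open NormedSpace Filter
open scoped Nat

section Aux

variable {A : Type*} [NormedRing A] [NormedAlgebra ℝ A] [CompleteSpace A]

private lemma aux_pow_norm_le (u : A) (n : ℕ) :
    ‖u ^ n‖ ≤ max ‖(1 : A)‖ 1 * ‖u‖ ^ n := by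
  cases n with
  | zero => simpa using le_max_left ‖(1 : A)‖ 1
  | succ n =>
    exact (norm_pow_le' u n.succ_pos).trans
      (le_mul_of_one_le_left (by positivity) (le_max_right _ _))

private lemma aux_norm_exp_le (u : A) :
    ‖exp u‖ ≤ max ‖(1 : A)‖ 1 * Real.exp ‖u‖ := by
  have hexp : Real.exp ‖u‖ = ∑' n : ℕ, ‖u‖ ^ n / n ! := by
    rw [Real.exp_eq_exp_ℝ, exp_eq_tsum_div]
  rw [exp_eq_tsum ℝ, hexp, ← tsum_mul_left]
  refine (norm_tsum_le_tsum_norm (norm_expSeries_summable' u)).trans ?_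
  refine Summable.tsum_le_tsum (fun n => ?_) (norm_expSeries_summable' u)
    ((Real.summable_pow_div_factorial ‖u‖).mul_left _)
  rw [norm_smul, Real.norm_eq_abs, abs_inv, Nat.abs_cast]
  calc ((n ! : ℝ))⁻¹ * ‖u ^ n‖ ≤ ((n ! : ℝ))⁻¹ * (max ‖(1 : A)‖ 1 * ‖u‖ ^ n) := by
        exact mul_le_mul_of_nonneg_left (aux_pow_norm_le u n) (by positivity)
    _ = max ‖(1 : A)‖ 1 * (‖u‖ ^ n / n !) := by
        rw [div_eq_inv_mul]; ring

private lemma aux_comm_pow (a b : A) {M : ℝ} (hM : 1 ≤ M) (hb : ‖b‖ ≤ M) (n : ℕ) :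
    ‖a * b ^ n - b ^ n * a‖ ≤ (n : ℝ) * max ‖(1 : A)‖ 1 * M ^ n * ‖a * b - b * a‖ := by
  set N : ℝ := max ‖(1 : A)‖ 1 with hN
  have hN1 : (1 : ℝ) ≤ N := le_max_right _ _
  have hN0 : (0 : ℝ) ≤ N := by linarith
  have hM0 : (0 : ℝ) ≤ M := le_trans zero_le_one hM
  set c : ℝ := ‖a * b - b * a‖ with hc
  have hc0 : (0 : ℝ) ≤ c := norm_nonneg _
  induction n with
  | zero => simp
  | succ n ih =>
    have key : a * b ^ (n + 1) - b ^ (n + 1) * a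
        = (a * b ^ n - b ^ n * a) * b + b ^ n * (a * b - b * a) := by
      rw [pow_succ]; noncomm_ring
    have hbn : ‖b ^ n‖ ≤ N * M ^ n := by
      refine (aux_pow_norm_le b n).trans ?_
      exact mul_le_mul_of_nonneg_left (pow_le_pow_left₀ (norm_nonneg b) hb n) hN0
    rw [key]
    calc ‖(a * b ^ n - b ^ n * a) * b + b ^ n * (a * b - b * a)‖
        ≤ ‖(a * b ^ n - b ^ n * a) * b‖ + ‖b ^ n * (a * b - b * a)‖ := norm_add_le _ _
      _ ≤ ‖a * b ^ n - b ^ n * a‖ * ‖b‖ + ‖b ^ n‖ * c :=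
          add_le_add (norm_mul_le _ _) (norm_mul_le _ _)
      _ ≤ ((n : ℝ) * N * M ^ n * c) * M + (N * M ^ n) * c := by
          refine add_le_add ?_ (mul_le_mul_of_nonneg_right hbn hc0)
          exact mul_le_mul ih hb (norm_nonneg _) (by positivity)
      _ ≤ (↑(n + 1) : ℝ) * N * M ^ (n + 1) * c := by
          have hQM : M ^ n * M = M ^ (n + 1) := (pow_succ M n).symm
          have step1 : (n : ℝ) * N * M ^ n * c * M = (n : ℝ) * N * M ^ (n + 1) * c := by
            rw [← hQM]; ring
          have hpow : M ^ n ≤ M ^ (n + 1) := by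
            calc M ^ n = M ^ n * 1 := (mul_one _).symm
              _ ≤ M ^ n * M := by
                  exact mul_le_mul_of_nonneg_left hM (by positivity)
              _ = M ^ (n + 1) := hQM
          have step2 : N * M ^ n * c ≤ N * M ^ (n + 1) * c :=
            mul_le_mul_of_nonneg_right (mul_le_mul_of_nonneg_left hpow hN0) hc0
          have heq : (↑(n + 1) : ℝ) * N * M ^ (n + 1) * c
              = (n : ℝ) * N * M ^ (n + 1) * c + N * M ^ (n + 1) * c := by
            push_cast; ring
          rw [heq, step1.symm] at *
          linarith [step1, step2]

private lemma aux_summable (M : ℝ) (hM : 0 ≤ M) :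
    Summable (fun n : ℕ => ((n ! : ℝ))⁻¹ * ((n : ℝ) * M ^ n)) := by
  rw [← summable_nat_add_iff 1]
  have : (fun n : ℕ => (((n + 1)! : ℝ))⁻¹ * ((↑(n + 1) : ℝ) * M ^ (n + 1)))
      = fun n : ℕ => M * (M ^ n / n !) := by
    funext n
    have h1 : (((n + 1)! : ℕ) : ℝ) = ((n : ℝ) + 1) * (n ! : ℝ) := by
      rw [Nat.factorial_succ]; push_cast; ring
    have h2 : ((n ! : ℝ)) ≠ 0 := Nat.cast_ne_zero.2 (Nat.factorial_ne_zero n)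
    have h3 : ((n : ℝ) + 1) ≠ 0 := by positivity
    rw [h1]
    push_cast
    field_simp
    ring
  rw [this]
  exact (Real.summable_pow_div_factorial M).mul_left M

private lemma aux_comm_exp (a b : A) {M : ℝ} (hM : 1 ≤ M) (hb : ‖b‖ ≤ M) :
    ‖a * exp b - exp b * a‖
      ≤ (∑' n : ℕ, ((n ! : ℝ))⁻¹ * ((n : ℝ) * M ^ n))
        * (max ‖(1 : A)‖ 1 * ‖a * b - b * a‖) := by
  have hM0 : (0 : ℝ) ≤ M := le_trans zero_le_one hM
  set N : ℝ := max ‖(1 : A)‖ 1 with hN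
  have hN0 : (0 : ℝ) ≤ N := le_trans zero_le_one (le_max_right _ _)
  set L : A →L[ℝ] A :=
    ContinuousLinearMap.mul ℝ A a - (ContinuousLinearMap.mul ℝ A).flip a with hL
  have hLapp : ∀ u : A, L u = a * u - u * a := by
    intro u
    simp [hL, ContinuousLinearMap.sub_apply, ContinuousLinearMap.mul_apply',
      ContinuousLinearMap.flip_apply]
  have hrw : a * exp b - exp b * a
      = ∑' n : ℕ, ((n ! : ℝ))⁻¹ • (a * b ^ n - b ^ n * a) := by
    rw [← hLapp, exp_eq_tsum ℝ, L.map_tsum (expSeries_summable' b)]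
    congr 1
    funext n
    rw [map_smul, hLapp]
  rw [hrw]
  have hmaj : ∀ n : ℕ, ‖((n ! : ℝ))⁻¹ • (a * b ^ n - b ^ n * a)‖
      ≤ ((n ! : ℝ))⁻¹ * ((n : ℝ) * M ^ n) * (N * ‖a * b - b * a‖) := by
    intro n
    rw [norm_smul, Real.norm_eq_abs, abs_inv, Nat.abs_cast]
    calc ((n ! : ℝ))⁻¹ * ‖a * b ^ n - b ^ n * a‖
        ≤ ((n ! : ℝ))⁻¹ * ((n : ℝ) * N * M ^ n * ‖a * b - b * a‖) :=
          mul_le_mul_of_nonneg_left (aux_comm_pow a b hM hb n) (by positivity)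
      _ = ((n ! : ℝ))⁻¹ * ((n : ℝ) * M ^ n) * (N * ‖a * b - b * a‖) := by ring
  have hsum2 : Summable
      (fun n : ℕ => ((n ! : ℝ))⁻¹ * ((n : ℝ) * M ^ n) * (N * ‖a * b - b * a‖)) :=
    (aux_summable M hM0).mul_right _
  have hsum1 : Summable (fun n : ℕ => ‖((n ! : ℝ))⁻¹ • (a * b ^ n - b ^ n * a)‖) :=
    Summable.of_nonneg_of_le (fun n => norm_nonneg _) hmaj hsum2
  calc ‖∑' n : ℕ, ((n ! : ℝ))⁻¹ • (a * b ^ n - b ^ n * a)‖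
      ≤ ∑' n : ℕ, ‖((n ! : ℝ))⁻¹ • (a * b ^ n - b ^ n * a)‖ := norm_tsum_le_tsum_norm hsum1
    _ ≤ ∑' n : ℕ, ((n ! : ℝ))⁻¹ * ((n : ℝ) * M ^ n) * (N * ‖a * b - b * a‖) :=
        Summable.tsum_le_tsum hmaj hsum1 hsum2
    _ = (∑' n : ℕ, ((n ! : ℝ))⁻¹ * ((n : ℝ) * M ^ n)) * (N * ‖a * b - b * a‖) :=
        tsum_mul_right

private lemma aux_key (a b : A) {M : ℝ} (hM : 1 ≤ M) (ha : ‖a‖ ≤ M) (hb : ‖b‖ ≤ M) :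
    ‖exp (a + b) - exp a * exp b‖
      ≤ ((max ‖(1 : A)‖ 1) ^ 4 * Real.exp M
            * (∑' n : ℕ, ((n ! : ℝ))⁻¹ * ((n : ℝ) * M ^ n))
            * Real.exp (2 * M) * Real.exp (2 * M)) * ‖a * b - b * a‖ := by
  have hM0 : (0 : ℝ) ≤ M := le_trans zero_le_one hM
  set N : ℝ := max ‖(1 : A)‖ 1 with hN
  have hN1 : (1 : ℝ) ≤ N := le_max_right _ _
  have hN0 : (0 : ℝ) ≤ N := by linarith
  set C : ℝ := ∑' n : ℕ, ((n ! : ℝ))⁻¹ * ((n : ℝ) * M ^ n) with hC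
  have hC0 : 0 ≤ C := tsum_nonneg (fun n => by positivity)
  set c : ℝ := ‖a * b - b * a‖ with hc
  have hc0 : 0 ≤ c := norm_nonneg _
  set f : ℝ → A := fun s => exp (s • a) * exp (s • b) * exp (s • (-(a + b))) with hf
  set f' : ℝ → A := fun s =>
    exp (s • a) * (a * exp (s • b) - exp (s • b) * a) * exp (s • (-(a + b))) with hf'
  have hderiv : ∀ s : ℝ, HasDerivAt f (f' s) s := by
    intro s
    have h1 := hasDerivAt_exp_smul_const (𝕂 := ℝ) a s
    have h2 := hasDerivAt_exp_smul_const (𝕂 := ℝ) b s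
    have h3 := hasDerivAt_exp_smul_const (𝕂 := ℝ) (-(a + b)) s
    have hD := (h1.mul h2).mul h3
    convert hD using 1
    · rfl
    have hcomm : Commute (s • (-(a + b))) (-(a + b)) := (Commute.refl _).smul_left s
    have hE : exp (s • (-(a + b))) * -(a + b) = -(a + b) * exp (s • (-(a + b))) :=
      (hcomm.exp_left).eq
    simp only [hf', Pi.mul_apply]
    rw [hE]
    noncomm_ring
  set B : ℝ := (N * Real.exp M) * (C * (N * c)) * (N * Real.exp (2 * M)) with hB
  have hbound : ∀ s ∈ Set.Icc (0 : ℝ) 1, ‖f' s‖ ≤ B := by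
    intro s hs
    obtain ⟨hs0, hs1⟩ := hs
    have habs : |s| ≤ 1 := abs_le.2 ⟨by linarith, hs1⟩
    have h1 : ‖exp (s • a)‖ ≤ N * Real.exp M := by
      refine (aux_norm_exp_le _).trans (mul_le_mul_of_nonneg_left (Real.exp_le_exp.2 ?_) hN0)
      rw [norm_smul, Real.norm_eq_abs]
      calc |s| * ‖a‖ ≤ 1 * M := mul_le_mul habs ha (norm_nonneg _) zero_le_one
        _ = M := one_mul M
    have h3 : ‖exp (s • (-(a + b)))‖ ≤ N * Real.exp (2 * M) := by
      refine (aux_norm_exp_le _).trans (mul_le_mul_of_nonneg_left (Real.exp_le_exp.2 ?_) hN0)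
      rw [norm_smul, Real.norm_eq_abs, norm_neg]
      calc |s| * ‖a + b‖ ≤ 1 * (2 * M) := by
            refine mul_le_mul habs ?_ (norm_nonneg _) zero_le_one
            calc ‖a + b‖ ≤ ‖a‖ + ‖b‖ := norm_add_le a b
              _ ≤ 2 * M := by linarith
        _ = 2 * M := one_mul _
    have hsb : ‖s • b‖ ≤ M := by
      rw [norm_smul, Real.norm_eq_abs]
      calc |s| * ‖b‖ ≤ 1 * M := mul_le_mul habs hb (norm_nonneg _) zero_le_one
        _ = M := one_mul M
    have h2 : ‖a * exp (s • b) - exp (s • b) * a‖ ≤ C * (N * c) := by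
      refine (aux_comm_exp a (s • b) hM hsb).trans ?_
      have hsmul : a * (s • b) - (s • b) * a = s • (a * b - b * a) := by
        rw [smul_sub, mul_smul_comm, smul_mul_assoc]
      rw [hsmul, norm_smul, Real.norm_eq_abs]
      refine mul_le_mul_of_nonneg_left (mul_le_mul_of_nonneg_left ?_ hN0) hC0
      calc |s| * c ≤ 1 * c := mul_le_mul_of_nonneg_right habs hc0
        _ = c := one_mul c
    calc ‖f' s‖ ≤ ‖exp (s • a) * (a * exp (s • b) - exp (s • b) * a)‖
          * ‖exp (s • (-(a + b)))‖ := norm_mul_le _ _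
      _ ≤ (‖exp (s • a)‖ * ‖a * exp (s • b) - exp (s • b) * a‖)
          * ‖exp (s • (-(a + b)))‖ :=
          mul_le_mul_of_nonneg_right (norm_mul_le _ _) (norm_nonneg _)
      _ ≤ B := by
          rw [hB]
          refine mul_le_mul (mul_le_mul h1 h2 (norm_nonneg _) ?_) h3 (norm_nonneg _) ?_
          · positivity
          · positivity
  have hmvt := (convex_Icc (0 : ℝ) 1).norm_image_sub_le_of_norm_hasDerivWithin_le
    (f' := f') (fun s _ => (hderiv s).hasDerivWithinAt) hbound
    (Set.left_mem_Icc.2 zero_le_one) (Set.right_mem_Icc.2 zero_le_one)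
  have hf0 : f 0 = 1 := by simp [hf]
  have hf1 : f 1 = exp a * exp b * exp (-(a + b)) := by simp [hf]
  have hdist : ‖f 1 - 1‖ ≤ B := by
    rw [hf0] at hmvt
    simpa using hmvt
  have hinv : exp (-(a + b)) * exp (a + b) = 1 := by
    rw [← exp_add_of_commute_of_mem_ball (𝕂 := ℝ) ((Commute.refl (a + b)).neg_left)
      ((expSeries_radius_eq_top ℝ A).symm ▸ edist_lt_top _ _)
      ((expSeries_radius_eq_top ℝ A).symm ▸ edist_lt_top _ _), neg_add_cancel, exp_zero]
  have hfactor : exp a * exp b - exp (a + b) = (f 1 - 1) * exp (a + b) := by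
    rw [hf1, sub_mul, one_mul, mul_assoc, hinv, mul_one]
  have hexp_ab : ‖exp (a + b)‖ ≤ N * Real.exp (2 * M) := by
    refine (aux_norm_exp_le _).trans (mul_le_mul_of_nonneg_left (Real.exp_le_exp.2 ?_) hN0)
    calc ‖a + b‖ ≤ ‖a‖ + ‖b‖ := norm_add_le a b
      _ ≤ 2 * M := by linarith
  calc ‖exp (a + b) - exp a * exp b‖
      = ‖exp a * exp b - exp (a + b)‖ := norm_sub_rev _ _
    _ = ‖(f 1 - 1) * exp (a + b)‖ := by rw [hfactor]
    _ ≤ ‖f 1 - 1‖ * ‖exp (a + b)‖ := norm_mul_le _ _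
    _ ≤ B * (N * Real.exp (2 * M)) := by
        refine mul_le_mul hdist hexp_ab (norm_nonneg _) ?_
        positivity
    _ = (N ^ 4 * Real.exp M * C * Real.exp (2 * M) * Real.exp (2 * M)) * c := by
        rw [hB]; ring

end Aux

/-- If `x_t`, `y_t` are uniformly bounded continuous paths in a unital Banach algebra whose
commutator tends to zero, then `‖exp(x_t + y_t) - exp(x_t)·exp(y_t)‖ → 0`. -/
theorem exp_sum_sub_exp_mul_exp_tendsto_zero {A : Type*} [NormedRing A] [NormedAlgebra ℝ A]
    [CompleteSpace A] (x y : ℝ → A)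
    (hx : ContinuousOn x (Set.Ici 1)) (hy : ContinuousOn y (Set.Ici 1))
    (hbdd : ∃ M > 0, ∀ t ∈ Set.Ici (1 : ℝ), ‖x t‖ ≤ M ∧ ‖y t‖ ≤ M)
    (hcomm : Tendsto (fun t => x t * y t - y t * x t) atTop (nhds 0)) :
    Tendsto (fun t => ‖exp (x t + y t) - exp (x t) * exp (y t)‖) atTop (nhds 0) := by
  obtain ⟨M₀, hM₀pos, hB⟩ := hbdd
  set M : ℝ := max M₀ 1 with hMdef
  have hM : 1 ≤ M := le_max_right _ _
  set K : ℝ := (max ‖(1 : A)‖ 1) ^ 4 * Real.exp M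
      * (∑' n : ℕ, ((n ! : ℝ))⁻¹ * ((n : ℝ) * M ^ n))
      * Real.exp (2 * M) * Real.exp (2 * M) with hK
  have hnorm : Tendsto (fun t => ‖x t * y t - y t * x t‖) atTop (nhds 0) := by
    have := hcomm.norm
    simpa using this
  have hg : Tendsto (fun t => K * ‖x t * y t - y t * x t‖) atTop (nhds 0) := by
    have := hnorm.const_mul K
    simpa using this
  refine squeeze_zero' (Eventually.of_forall fun t => norm_nonneg _) ?_ hg
  filter_upwards [eventually_ge_atTop (1 : ℝ)] with t ht
  have hxt : ‖x t‖ ≤ M := (hB t ht).1.trans (le_max_left _ _)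
  have hyt : ‖y t‖ ≤ M := (hB t ht).2.trans (le_max_left _ _)
  exact aux_key (x t) (y t) hM hxt hyt
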